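/- Let R be a discrete valuation ring of generic characteristic with uniformizer π = θ(t), and let φ_E(t) = Σ_{j=0}^r a_j τ^j with a_0 = π, a_r a unit, r ≥ 1. Then the only restricted twisted power series f = Σ_{i≥0} b_i τ^i satisfying π f = f ∘ φ_E(t) (i.e. the only A-linear homomorphism E → Ĝ_a) is f = 0. -/

import Mathlib

/-- Multiplication (= composition) in the twisted restricted power series ring `R{τ}^`
with `τ b = b^q τ`. -/
def tcomp (R : Type*) [CommRing R] (q : ℕ) (f g : ℕ → R) : ℕ → R :=
  fun n => ∑ i ∈ Finset.range (n + 1), f i * (g (n - i)) ^ q ^ i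

/-- Theorem (order0): let `R` be a π-torsion-free DVR of generic characteristic with
uniformizer `π = θ(t)`, and let `φ_E(t) = Σ_{j=0}^r aⱼ τ^j` be a Drinfeld module of rank
`r ≥ 1` (so `a₀ = π`, `a_r` a unit).  Then the only restricted twisted power series
`f = Σ bᵢ τ^i` (restrictedness: `bᵢ → 0` π-adically) with `π·f = f ∘ φ_E(t)` — i.e. the only
`A`-linear homomorphism `E → Ĝₐ` — is `f = 0`. -/
theorem stmt5 (R : Type*) [CommRing R] [IsDomain R] [IsDiscreteValuationRing R]
    (π : R) (hπ : Irreducible π)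
    (p h : ℕ) (hp : p.Prime) (hh : 1 ≤ h) (q : ℕ) (hq : q = p ^ h)
    (r : ℕ) (hr : 1 ≤ r) (a : ℕ → R)
    (ha0 : a 0 = π) (har : IsUnit (a r)) (hatop : ∀ j, r < j → a j = 0)
    (b : ℕ → R)
    (hrestricted : ∀ k : ℕ, ∃ N : ℕ, ∀ i, N ≤ i → π ^ k ∣ b i)
    (hchar : ∀ n, tcomp R q b a n = π * b n) :
    b = 0 := by
  have main : ∀ k i, π ^ k ∣ b i := by
    intro k
    induction k with
    | zero => intro i; simp
    | succ k hk =>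
      obtain ⟨N, hN⟩ := hrestricted (k + 1)
      have step : ∀ d m, N ≤ m + d → π ^ (k + 1) ∣ b m := by
        intro d
        induction d with
        | zero => intro m hm; exact hN m (by omega)
        | succ d hd =>
          intro m hm
          by_cases hNm : N ≤ m + d
          · exact hd m hNm
          have hmem : m ∈ Finset.range (m + r + 1) := by
            simp only [Finset.mem_range]; omega
          have hsum : b m * a (m + r - m) ^ q ^ m
              + ∑ i ∈ (Finset.range (m + r + 1)).erase m, b i * a (m + r - i) ^ q ^ i
              = π * b (m + r) := by
            have hc := hchar (m + r)
            simp only [tcomp] at hc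
            exact (Finset.add_sum_erase _ (fun i => b i * a (m + r - i) ^ q ^ i) hmem).trans hc
          have hrm : m + r - m = r := by omega
          rw [hrm] at hsum
          have hdvd : π ^ (k + 1) ∣ b m * a r ^ q ^ m := by
            have h1 : π ^ (k + 1) ∣ π * b (m + r) := by
              rw [pow_succ, mul_comm]
              exact mul_dvd_mul_left π (hk (m + r))
            have h2 : π ^ (k + 1) ∣
                ∑ i ∈ (Finset.range (m + r + 1)).erase m, b i * a (m + r - i) ^ q ^ i := by
              apply Finset.dvd_sum
              intro i hi
              obtain ⟨hne, hir⟩ := Finset.mem_erase.mp hi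
              rw [Finset.mem_range] at hir
              rcases lt_or_gt_of_ne hne with hlt | hgt
              · -- i < m : the coefficient a (m + r - i) vanishes
                have hz : a (m + r - i) = 0 := hatop _ (by omega)
                rw [hz, zero_pow (pow_ne_zero i (hq ▸ pow_ne_zero h hp.ne_zero : q ≠ 0)), mul_zero]
                exact dvd_zero _
              · -- i > m : use inner induction hypothesis
                have : π ^ (k + 1) ∣ b i := hd i (by omega)
                exact Dvd.dvd.mul_right this _
            have : b m * a r ^ q ^ m = π * b (m + r)
                - ∑ i ∈ (Finset.range (m + r + 1)).erase m, b i * a (m + r - i) ^ q ^ i := by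
              exact eq_sub_of_add_eq hsum
            rw [this]
            exact dvd_sub h1 h2
          have hu : IsUnit (a r ^ q ^ m) := har.pow _
          exact (IsUnit.dvd_mul_right hu).mp hdvd
      intro i
      exact step (N) i (by omega)
  funext i
  simp only [Pi.zero_apply]
  by_contra hne
  obtain ⟨n, u, hu⟩ := IsDiscreteValuationRing.eq_unit_mul_pow_irreducible hne hπ
  have hd := main (n + 1) i
  rw [hu, pow_succ] at hd
  have : π ^ n * π ∣ π ^ n * (u : R) := by
    rwa [mul_comm (u : R) _] at hd
  have hπu : π ∣ (u : R) := (mul_dvd_mul_iff_left (pow_ne_zero n hπ.ne_zero)).mp this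
  exact hπ.not_isUnit (isUnit_of_dvd_unit hπu u.isUnit)
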